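/- There exists a universal constant C > 0 such that the following holds. Let n ≥ 1, d ≥ 1, let P be a polynomial of degree at most d on {-1,1}^n, let X be uniformly distributed on {-1,1}^n, and for r > 0 let a_r be an e^{-r}-quantile of P(X). Then for all r ≥ 1, a_r - a_1 ≤ C^d · (r/d + 1)^{d/2} · (E|P(X)|^2)^{1/2}. -/

import Mathlib

open Classical

/-- Expectation with respect to the uniform measure on the discrete cube `{-1,1}^n`,
encoded as `Fin n → Bool` (`true ↦ 1`, `false ↦ -1`). -/
noncomputable def cubeE (n : ℕ) (f : (Fin n → Bool) → ℝ) : ℝ :=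
  (∑ x : Fin n → Bool, f x) / 2 ^ n

/-- The real value of a coordinate of the cube: `true ↦ 1`, `false ↦ -1`. -/
def cubeSign (b : Bool) : ℝ := if b then 1 else -1

/-- `P` is (the restriction to the cube of) a multilinear polynomial of degree at most `d`:
`P x = ∑_{#S ≤ d} a_S ∏_{i ∈ S} x_i`. -/
def IsPolyDeg (n d : ℕ) (P : (Fin n → Bool) → ℝ) : Prop :=
  ∃ a : Finset (Fin n) → ℝ,
    (∀ S : Finset (Fin n), d < S.card → a S = 0) ∧
    ∀ x, P x = ∑ S : Finset (Fin n), a S * ∏ i ∈ S, cubeSign (x i)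

/-- Probability (uniform measure) of a set of points of the cube. -/
noncomputable def cubePr (n : ℕ) (A : Set (Fin n → Bool)) : ℝ :=
  (∑ x : Fin n → Bool, if x ∈ A then (1 : ℝ) else 0) / 2 ^ n

/-- `a` is an `e^{-r}`-quantile of `P(X)`:
`ℙ(P(X) ≥ a) ≥ e^{-r}` and `ℙ(P(X) ≤ a) ≥ 1 - e^{-r}`. -/
def IsQuantile (n : ℕ) (P : (Fin n → Bool) → ℝ) (r a : ℝ) : Prop :=
  Real.exp (-r) ≤ cubePr n {x | a ≤ P x} ∧ 1 - Real.exp (-r) ≤ cubePr n {x | P x ≤ a}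

/-- Discrete partial derivative: `∂_i f(x) = (f(T_i^1 x) - f(T_i^{-1} x))/2`. -/
noncomputable def discDeriv (n : ℕ) (f : (Fin n → Bool) → ℝ) (i : Fin n)
    (x : Fin n → Bool) : ℝ :=
  (f (Function.update x i true) - f (Function.update x i false)) / 2

/-- Squared norm of the discrete gradient: `|∇f(x)|² = ∑_i |∂_i f(x)|²`. -/
noncomputable def gradSq (n : ℕ) (f : (Fin n → Bool) → ℝ) (x : Fin n → Bool) : ℝ :=
  ∑ i : Fin n, (discDeriv n f i x) ^ 2

open Finset

-- basic cubeE lemmas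
lemma cubeE_nonneg {n : ℕ} {f : (Fin n → Bool) → ℝ} (h : ∀ x, 0 ≤ f x) : 0 ≤ cubeE n f :=
  div_nonneg (Finset.sum_nonneg fun x _ => h x) (by positivity)

lemma cubeE_mono {n : ℕ} {f g : (Fin n → Bool) → ℝ} (h : ∀ x, f x ≤ g x) :
    cubeE n f ≤ cubeE n g := by
  unfold cubeE
  apply div_le_div_of_nonneg_right ?_ (by positivity)
  exact Finset.sum_le_sum fun x _ => h x

lemma cubeE_add {n : ℕ} (f g : (Fin n → Bool) → ℝ) :
    cubeE n (fun x => f x + g x) = cubeE n f + cubeE n g := by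
  unfold cubeE
  rw [Finset.sum_add_distrib, add_div]

lemma cubeE_smul {n : ℕ} (c : ℝ) (f : (Fin n → Bool) → ℝ) :
    cubeE n (fun x => c * f x) = c * cubeE n f := by
  unfold cubeE
  rw [← Finset.mul_sum, mul_div_assoc]

lemma cubeE_const (n : ℕ) (c : ℝ) : cubeE n (fun _ => c) = c := by
  unfold cubeE
  rw [Finset.sum_const]
  simp [Fintype.card_fun]

lemma cubeE_succ (n : ℕ) (f : (Fin (n+1) → Bool) → ℝ) :
    cubeE (n+1) f = cubeE n (fun y => (f (Fin.cons true y) + f (Fin.cons false y)) / 2) := by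
  unfold cubeE
  have e := Fin.consEquiv (fun _ : Fin (n+1) => Bool)
  have h1 : (∑ x : Fin (n+1) → Bool, f x)
      = ∑ p : Bool × (Fin n → Bool), f (Fin.cons p.1 p.2) := by
    rw [← Equiv.sum_comp (Fin.consEquiv (fun _ : Fin (n+1) => Bool)) f]
    rfl
  rw [h1, Fintype.sum_prod_type_right]
  rw [Finset.sum_div, Finset.sum_div]
  apply Finset.sum_congr rfl
  intro y _
  rw [Fintype.sum_bool]
  ring

lemma univ_fin_succ (n : ℕ) :
    (univ : Finset (Fin (n+1))) = insert 0 ((univ : Finset (Fin n)).map (Fin.succEmb n)) := by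
  ext i
  simp only [mem_univ, true_iff, mem_insert, mem_map, Fin.coe_succEmb]
  cases i using Fin.cases with
  | zero => exact Or.inl rfl
  | succ j => exact Or.inr ⟨j, trivial, rfl⟩

lemma zero_not_mem_map_succ (n : ℕ) (T : Finset (Fin n)) :
    (0 : Fin (n+1)) ∉ T.map (Fin.succEmb n) := by
  simp only [mem_map, Fin.coe_succEmb]
  rintro ⟨j, -, hj⟩
  exact (Fin.succ_ne_zero j) hj

lemma powerset_map_univ (n : ℕ) :
    ((univ : Finset (Fin n)).map (Fin.succEmb n)).powerset
      = (univ : Finset (Finset (Fin n))).image (fun T => T.map (Fin.succEmb n)) := by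
  ext S
  simp only [mem_powerset, mem_image, Finset.subset_map_iff, mem_univ, true_and]
  constructor
  · rintro ⟨u, -, rfl⟩; exact ⟨u, rfl⟩
  · rintro ⟨u, rfl⟩; exact ⟨u, subset_univ u, rfl⟩

lemma sum_split (n : ℕ) (a : Finset (Fin (n+1)) → ℝ) (g : Fin (n+1) → ℝ) :
    ∑ S : Finset (Fin (n+1)), a S * ∏ i ∈ S, g i
      = (∑ T : Finset (Fin n), a (T.map (Fin.succEmb n)) * ∏ i ∈ T, g i.succ)
        + g 0 * ∑ T : Finset (Fin n),
            a (insert 0 (T.map (Fin.succEmb n))) * ∏ i ∈ T, g i.succ := by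
  have h0 := zero_not_mem_map_succ n univ
  have hinj : ∀ T₁ ∈ (univ : Finset (Finset (Fin n))), ∀ T₂ ∈ univ,
      T₁.map (Fin.succEmb n) = T₂.map (Fin.succEmb n) → T₁ = T₂ := by
    intro T₁ _ T₂ _ h
    exact Finset.map_injective _ h
  have key : ∑ S : Finset (Fin (n+1)), a S * ∏ i ∈ S, g i
      = ∑ S ∈ ((univ : Finset (Fin n)).map (Fin.succEmb n)).powerset, a S * ∏ i ∈ S, g i
        + ∑ S ∈ ((univ : Finset (Fin n)).map (Fin.succEmb n)).powerset,
            a (insert 0 S) * ∏ i ∈ insert 0 S, g i := by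
    rw [← Finset.powerset_univ, univ_fin_succ n, Finset.sum_powerset_insert h0]
  rw [key, powerset_map_univ n, Finset.sum_image hinj, Finset.sum_image hinj]
  congr 1
  · apply Finset.sum_congr rfl
    intro T _
    rw [Finset.prod_map]
    rfl
  · rw [Finset.mul_sum]
    apply Finset.sum_congr rfl
    intro T _
    rw [Finset.prod_insert (zero_not_mem_map_succ n T), Finset.prod_map]
    simp only [Fin.coe_succEmb]
    ring

lemma choose_two_mul_le (k : ℕ) : ∀ j : ℕ, j ≤ k → (2*k).choose (2*j) ≤ k.choose j * (2*k)^j := by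
  intro j
  induction j with
  | zero => simp
  | succ j ih =>
    intro hjk
    have hjk' : j < k := hjk
    have ihj := ih (le_of_lt hjk')
    -- key recurrences
    have key1 : (2*k).choose (2*j+1) * (2*j+1) = (2*k).choose (2*j) * (2*k - 2*j) :=
      Nat.choose_succ_right_eq (2*k) (2*j)
    have key2 : (2*k).choose (2*j+2) * (2*j+2) = (2*k).choose (2*j+1) * (2*k - (2*j+1)) :=
      Nat.choose_succ_right_eq (2*k) (2*j+1)
    have keyk : k.choose (j+1) * (j+1) = k.choose j * (k-j) :=
      Nat.choose_succ_right_eq k j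
    have hpos : 0 < (2*j+2) * (2*j+1) := by positivity
    apply Nat.le_of_mul_le_mul_right ?_ hpos
    have lhs_eq : (2*k).choose (2*(j+1)) * ((2*j+2) * (2*j+1))
        = (2*k).choose (2*j) * ((2*k - 2*j) * (2*k - (2*j+1))) := by
      have : 2*(j+1) = 2*j+2 := by ring
      rw [this]
      calc (2*k).choose (2*j+2) * ((2*j+2) * (2*j+1))
          = ((2*k).choose (2*j+2) * (2*j+2)) * (2*j+1) := by ring
        _ = ((2*k).choose (2*j+1) * (2*k - (2*j+1))) * (2*j+1) := by rw [key2]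
        _ = ((2*k).choose (2*j+1) * (2*j+1)) * (2*k - (2*j+1)) := by ring
        _ = ((2*k).choose (2*j) * (2*k - 2*j)) * (2*k - (2*j+1)) := by rw [key1]
        _ = (2*k).choose (2*j) * ((2*k - 2*j) * (2*k - (2*j+1))) := by ring
    rw [lhs_eq]
    have e1 : 2*k - 2*j = 2*(k-j) := by omega
    have e2 : 2*k - (2*j+1) ≤ 2*k := by omega
    calc (2*k).choose (2*j) * ((2*k - 2*j) * (2*k - (2*j+1)))
        ≤ (k.choose j * (2*k)^j) * ((2*k - 2*j) * (2*k - (2*j+1))) :=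
          Nat.mul_le_mul_right _ ihj
      _ = k.choose j * (k-j) * (2*k)^j * 2 * (2*k - (2*j+1)) := by rw [e1]; ring
      _ ≤ k.choose j * (k-j) * (2*k)^j * 2 * (2*k * (2*j+1)) := by
          apply Nat.mul_le_mul_left
          calc 2*k - (2*j+1) ≤ 2*k := e2
            _ ≤ 2*k * (2*j+1) := Nat.le_mul_of_pos_right _ (by omega)
      _ = (k.choose j * (k-j)) * ((2*k)^(j+1) * (2*(2*j+1))) := by ring
      _ = (k.choose (j+1) * (j+1)) * ((2*k)^(j+1) * (2*(2*j+1))) := by rw [keyk]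
      _ = k.choose (j+1) * (2*k)^(j+1) * ((2*j+2) * (2*j+1)) := by ring

lemma even_pow_sum (k : ℕ) (a b : ℝ) :
    ((a+b)^(2*k) + (a-b)^(2*k))/2
      = ∑ i ∈ range (k+1), (a^2)^i * (b^2)^(k-i) * ((2*k).choose (2*i)) := by
  have hab : (a+b)^(2*k) = ∑ j ∈ range (2*k+1), a^j * b^(2*k-j) * ((2*k).choose j) :=
    add_pow a b (2*k)
  have hab2 : (a-b)^(2*k) = ∑ j ∈ range (2*k+1), a^j * (-b)^(2*k-j) * ((2*k).choose j) := by
    rw [sub_eq_add_neg]; exact add_pow a (-b) (2*k)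
  rw [hab, hab2, ← Finset.sum_add_distrib]
  have step : ∀ j ∈ range (2*k+1),
      (a^j * b^(2*k-j) * ((2*k).choose j) + a^j * (-b)^(2*k-j) * ((2*k).choose j))
        = (if Even j then 2 * (a^j * b^(2*k-j) * ((2*k).choose j)) else 0) := by
    intro j hj
    rw [mem_range] at hj
    have hj' : j ≤ 2*k := by omega
    by_cases h : Even j
    · have : Even (2*k - j) := by
        rcases h with ⟨m, hm⟩
        exact ⟨k - m, by omega⟩
      rw [if_pos h, this.neg_pow]
      ring
    · have : ¬ Even (2*k - j) := by
        intro ⟨m, hm⟩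
        exact h ⟨k - m, by omega⟩
      have hodd : Odd (2*k - j) := Nat.not_even_iff_odd.mp this
      rw [if_neg h, hodd.neg_pow]
      ring
  rw [Finset.sum_congr rfl step]
  have himg : (range (k+1)).image (fun i => 2*i) ⊆ range (2*k+1) := by
    intro x hx
    rw [mem_image] at hx
    obtain ⟨i, hi, rfl⟩ := hx
    rw [mem_range] at hi ⊢
    omega
  have hzero : ∀ x ∈ range (2*k+1), x ∉ (range (k+1)).image (fun i => 2*i) →
      (if Even x then 2 * (a^x * b^(2*k-x) * ((2*k).choose x : ℝ)) else 0) = 0 := by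
    intro x hx hnx
    rw [if_neg]
    intro ⟨m, hm⟩
    apply hnx
    rw [mem_image]
    rw [mem_range] at hx
    exact ⟨m, mem_range.mpr (by omega), by omega⟩
  rw [← Finset.sum_subset himg hzero]
  rw [Finset.sum_image (by intro x _ y _ h; simp only at h; omega)]
  rw [Finset.sum_div]
  apply Finset.sum_congr rfl
  intro i hi
  rw [mem_range] at hi
  have h1 : Even (2*i) := ⟨i, by omega⟩
  rw [if_pos h1]
  have h2 : 2*k - 2*i = 2*(k-i) := by omega
  rw [h2, pow_mul, pow_mul]
  ring

lemma two_point (k : ℕ) (hk : 1 ≤ k) (a b : ℝ) :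
    ((a+b)^(2*k) + (a-b)^(2*k))/2 ≤ (a^2 + (2*k : ℝ) * b^2)^k := by
  rw [even_pow_sum k a b, add_pow]
  apply Finset.sum_le_sum
  intro i hi
  rw [mem_range] at hi
  have hik : i ≤ k := by omega
  have hchoose : ((2*k).choose (2*i)) ≤ k.choose i * (2*k)^(k-i) := by
    have hsym : (2*k).choose (2*i) = (2*k).choose (2*(k-i)) := by
      have : 2*(k-i) = 2*k - 2*i := by omega
      rw [this, Nat.choose_symm (by omega)]
    rw [hsym]
    calc (2*k).choose (2*(k-i)) ≤ k.choose (k-i) * (2*k)^(k-i) :=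
          choose_two_mul_le k (k-i) (by omega)
      _ = k.choose i * (2*k)^(k-i) := by rw [Nat.choose_symm hik]
  have hnn : (0:ℝ) ≤ (a^2)^i * (b^2)^(k-i) := by positivity
  calc (a^2)^i * (b^2)^(k-i) * ((2*k).choose (2*i) : ℝ)
      ≤ (a^2)^i * (b^2)^(k-i) * ((k.choose i : ℝ) * (2*k : ℝ)^(k-i)) := by
        apply mul_le_mul_of_nonneg_left ?_ hnn
        calc ((2*k).choose (2*i) : ℝ) ≤ ((k.choose i * (2*k)^(k-i) : ℕ) : ℝ) := by
              exact_mod_cast hchoose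
          _ = (k.choose i : ℝ) * (2*k : ℝ)^(k-i) := by push_cast; ring
    _ = (a^2)^i * ((2*k:ℝ) * b^2)^(k-i) * (k.choose i : ℝ) := by
        rw [mul_pow]; ring


lemma cubeE_minkowski (n k : ℕ) (hk : 1 ≤ k) (F G : (Fin n → Bool) → ℝ)
    (hF : ∀ x, 0 ≤ F x) (hG : ∀ x, 0 ≤ G x) (α β : ℝ) (hα : 0 ≤ α) (hβ : 0 ≤ β)
    (h1 : cubeE n (fun x => F x ^ k) ≤ α ^ k) (h2 : cubeE n (fun x => G x ^ k) ≤ β ^ k) :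
    cubeE n (fun x => (F x + G x) ^ k) ≤ (α + β) ^ k := by
  have hp : (1:ℝ) ≤ (k:ℝ) := by exact_mod_cast hk
  have hk0 : (k:ℝ) ≠ 0 := by positivity
  have hN : (0:ℝ) < 2 ^ n := by positivity
  set S0 := ∑ x : Fin n → Bool, (F x + G x) ^ k with hS0
  set S1 := ∑ x : Fin n → Bool, F x ^ k with hS1
  set S2 := ∑ x : Fin n → Bool, G x ^ k with hS2
  have hS0nn : 0 ≤ S0 :=
    Finset.sum_nonneg fun x _ => pow_nonneg (add_nonneg (hF x) (hG x)) k
  have hS1nn : 0 ≤ S1 := Finset.sum_nonneg fun x _ => pow_nonneg (hF x) k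
  have hS2nn : 0 ≤ S2 := Finset.sum_nonneg fun x _ => pow_nonneg (hG x) k
  -- Minkowski with rpow
  have mink : S0 ^ ((k:ℝ)⁻¹) ≤ S1 ^ ((k:ℝ)⁻¹) + S2 ^ ((k:ℝ)⁻¹) := by
    have := Real.Lp_add_le_of_nonneg (p := (k:ℝ)) (s := Finset.univ)
      (f := F) (g := G) hp (fun x _ => hF x) (fun x _ => hG x)
    have cast1 : ∀ h : (Fin n → Bool) → ℝ, (∀ x, 0 ≤ h x) →
        (∑ x : Fin n → Bool, h x ^ (k:ℝ)) = ∑ x : Fin n → Bool, h x ^ k := by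
      intro h hh
      exact Finset.sum_congr rfl fun x _ => Real.rpow_natCast (h x) k
    rw [cast1 _ (fun x => add_nonneg (hF x) (hG x)), cast1 F hF, cast1 G hG,
      one_div] at this
    exact this
  -- bounds on roots
  set W : ℝ := ((2:ℝ)^n) ^ ((k:ℝ)⁻¹) with hW
  have hWnn : 0 ≤ W := Real.rpow_nonneg (le_of_lt hN) _
  have rpow_pow : ∀ c : ℝ, 0 ≤ c → (c ^ k) ^ ((k:ℝ)⁻¹) = c := by
    intro c hc
    rw [← Real.rpow_natCast c k, ← Real.rpow_mul hc, mul_inv_cancel₀ hk0, Real.rpow_one]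
  have root : ∀ (S : ℝ), 0 ≤ S → ∀ c : ℝ, 0 ≤ c → S / 2^n ≤ c ^ k →
      S ^ ((k:ℝ)⁻¹) ≤ W * c := by
    intro S hSnn c hc hle
    have hS2n : S ≤ 2^n * c^k := by
      rw [div_le_iff₀ hN] at hle
      linarith [hle]
    calc S ^ ((k:ℝ)⁻¹) ≤ (2^n * c^k) ^ ((k:ℝ)⁻¹) :=
          Real.rpow_le_rpow hSnn hS2n (by positivity)
      _ = W * c := by
          rw [Real.mul_rpow (le_of_lt hN) (by positivity), rpow_pow c hc]
  have root1 : S1 ^ ((k:ℝ)⁻¹) ≤ W * α := root S1 hS1nn α hα h1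
  have root2 : S2 ^ ((k:ℝ)⁻¹) ≤ W * β := root S2 hS2nn β hβ h2
  have final : S0 ^ ((k:ℝ)⁻¹) ≤ W * (α + β) := by
    calc S0 ^ ((k:ℝ)⁻¹) ≤ S1 ^ ((k:ℝ)⁻¹) + S2 ^ ((k:ℝ)⁻¹) := mink
      _ ≤ W * α + W * β := add_le_add root1 root2
      _ = W * (α + β) := by ring
  have powk : S0 ≤ (W * (α + β)) ^ k := by
    have h := pow_le_pow_left₀ (Real.rpow_nonneg hS0nn _) final k
    have e1 : (S0 ^ ((k:ℝ)⁻¹)) ^ k = S0 := by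
      rw [← Real.rpow_natCast (S0 ^ ((k:ℝ)⁻¹)) k, ← Real.rpow_mul hS0nn,
        inv_mul_cancel₀ hk0, Real.rpow_one]
    rwa [e1] at h
  have hWk : W ^ k = 2 ^ n := by
    rw [hW, ← Real.rpow_natCast (((2:ℝ)^n) ^ ((k:ℝ)⁻¹)) k, ← Real.rpow_mul (le_of_lt hN),
      inv_mul_cancel₀ hk0, Real.rpow_one]
  show S0 / 2^n ≤ (α + β)^k
  rw [div_le_iff₀ hN]
  calc S0 ≤ (W * (α + β)) ^ k := powk
    _ = W^k * (α+β)^k := mul_pow _ _ _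
    _ = 2^n * (α+β)^k := by rw [hWk]
    _ = (α+β)^k * 2^n := by ring

lemma moment_bound (n : ℕ) : ∀ (d k : ℕ), 1 ≤ k → ∀ P : (Fin n → Bool) → ℝ, IsPolyDeg n d P →
    cubeE n (fun x => P x ^ (2*k)) ≤ ((2*k : ℝ)^d * cubeE n (fun x => P x ^ 2))^k := by
  induction n with
  | zero =>
    intro d k hk P _
    have huniq : ∀ f : (Fin 0 → Bool) → ℝ, cubeE 0 f = f default := by
      intro f
      unfold cubeE
      rw [pow_zero, div_one]
      exact (Fintype.sum_unique f).trans (congrArg f (Subsingleton.elim _ _))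
    rw [huniq, huniq]
    have h2k : (1:ℝ) ≤ (2*k : ℝ) := by
      have : (1:ℕ) ≤ 2*k := by omega
      exact_mod_cast this
    calc (P default) ^ (2*k) = ((P default)^2)^k := by rw [← pow_mul]
      _ ≤ ((2*k:ℝ)^d * (P default)^2)^k := by
          apply pow_le_pow_left₀ (sq_nonneg _)
          exact le_mul_of_one_le_left (sq_nonneg _) (one_le_pow₀ h2k)
  | succ n ih =>
    intro d k hk P hP
    obtain ⟨a, ha, haP⟩ := hP
    have h2k : (1:ℝ) ≤ (2*k : ℝ) := by
      have : (1:ℕ) ≤ 2*k := by omega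
      exact_mod_cast this
    cases d with
    | zero =>
      have hconst : ∀ x, P x = a ∅ := by
        intro x
        rw [haP x, Finset.sum_eq_single ∅]
        · simp
        · intro S _ hS
          rw [ha S (Finset.card_pos.mpr (Finset.nonempty_iff_ne_empty.mpr hS)), zero_mul]
        · intro h; exact absurd (Finset.mem_univ ∅) h
      have hfun : ∀ m : ℕ, (fun x : Fin (n+1) → Bool => P x ^ m) = fun _ => (a ∅)^m := by
        intro m; funext x; rw [hconst x]
      rw [hfun (2*k), hfun 2, cubeE_const, cubeE_const, pow_zero, one_mul, ← pow_mul]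
    | succ d =>
      set aQ : Finset (Fin n) → ℝ := fun T => a (T.map (Fin.succEmb n)) with haQ
      set aR : Finset (Fin n) → ℝ := fun T => a (insert 0 (T.map (Fin.succEmb n))) with haR
      set Q : (Fin n → Bool) → ℝ :=
        fun y => ∑ T : Finset (Fin n), aQ T * ∏ i ∈ T, cubeSign (y i) with hQdef
      set R : (Fin n → Bool) → ℝ :=
        fun y => ∑ T : Finset (Fin n), aR T * ∏ i ∈ T, cubeSign (y i) with hRdef
      have hQ : IsPolyDeg n (d+1) Q :=
        ⟨aQ, fun S hS => ha _ (by rwa [Finset.card_map]), fun y => rfl⟩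
      have hR : IsPolyDeg n d R :=
        ⟨aR, fun S hS => ha _ (by
          rw [Finset.card_insert_of_notMem (zero_not_mem_map_succ n S), Finset.card_map]
          omega), fun y => rfl⟩
      have hPb : ∀ (b : Bool) (y : Fin n → Bool),
          P (Fin.cons b y) = Q y + cubeSign b * R y := by
        intro b y
        rw [haP]
        have h := sum_split n a (fun i => cubeSign ((Fin.cons b y : Fin (n+1) → Bool) i))
        have e1 : ∀ i : Fin n, (Fin.cons b y : Fin (n+1) → Bool) i.succ = y i :=
          fun i => @Fin.cons_succ n (fun _ => Bool) b y i
        have e0 : (Fin.cons b y : Fin (n+1) → Bool) 0 = b := @Fin.cons_zero n (fun _ => Bool) b y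
        simp only [e1, e0] at h
        exact h
      have htrue : ∀ y, P (Fin.cons true y) = Q y + R y := by
        intro y; rw [hPb]; simp [cubeSign]
      have hfalse : ∀ y, P (Fin.cons false y) = Q y - R y := by
        intro y; rw [hPb]; simp [cubeSign]; ring
      have E1 : cubeE (n+1) (fun x => P x ^ (2*k))
          = cubeE n (fun y => ((Q y + R y)^(2*k) + (Q y - R y)^(2*k))/2) := by
        rw [cubeE_succ]
        congr 1; funext y; rw [htrue y, hfalse y]
      have E2 : cubeE (n+1) (fun x => P x ^ 2)
          = cubeE n (fun y => Q y ^ 2) + cubeE n (fun y => R y ^ 2) := by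
        rw [cubeE_succ, ← cubeE_add]
        congr 1; funext y; rw [htrue y, hfalse y]; ring
      have hQ2 : (0:ℝ) ≤ cubeE n (fun y => Q y ^ 2) := cubeE_nonneg fun y => sq_nonneg _
      have hR2 : (0:ℝ) ≤ cubeE n (fun y => R y ^ 2) := cubeE_nonneg fun y => sq_nonneg _
      set α : ℝ := (2*k:ℝ)^(d+1) * cubeE n (fun y => Q y ^ 2) with hαdef
      set β : ℝ := (2*k:ℝ)^(d+1) * cubeE n (fun y => R y ^ 2) with hβdef
      have hα : 0 ≤ α := mul_nonneg (by positivity) hQ2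
      have hβ : 0 ≤ β := mul_nonneg (by positivity) hR2
      have h1 : cubeE n (fun y => (Q y ^ 2) ^ k) ≤ α ^ k := by
        have e : (fun y => (Q y ^ 2) ^ k) = fun y => Q y ^ (2*k) := by
          funext y; rw [← pow_mul]
        rw [e]
        exact ih (d+1) k hk Q hQ
      have h2 : cubeE n (fun y => ((2*k:ℝ) * R y ^ 2) ^ k) ≤ β ^ k := by
        have e : (fun y => ((2*k:ℝ) * R y ^ 2) ^ k)
            = fun y => (2*k:ℝ)^k * R y ^ (2*k) := by
          funext y; rw [mul_pow, ← pow_mul]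
        rw [e, cubeE_smul]
        calc (2*k:ℝ)^k * cubeE n (fun y => R y ^ (2*k))
            ≤ (2*k:ℝ)^k * ((2*k:ℝ)^d * cubeE n (fun y => R y ^ 2))^k := by
              apply mul_le_mul_of_nonneg_left (ih d k hk R hR) (by positivity)
          _ = β ^ k := by rw [hβdef, ← mul_pow]; ring_nf
      have mink := cubeE_minkowski n k hk (fun y => Q y ^ 2) (fun y => (2*k:ℝ) * R y ^ 2)
        (fun y => sq_nonneg _) (fun y => mul_nonneg (by positivity) (sq_nonneg _))
        α β hα hβ h1 h2
      calc cubeE (n+1) (fun x => P x ^ (2*k))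
          = cubeE n (fun y => ((Q y + R y)^(2*k) + (Q y - R y)^(2*k))/2) := E1
        _ ≤ cubeE n (fun y => (Q y ^ 2 + (2*k:ℝ) * R y ^ 2)^k) :=
            cubeE_mono fun y => two_point k hk (Q y) (R y)
        _ ≤ (α + β)^k := mink
        _ = ((2*k:ℝ)^(d+1) * cubeE (n+1) (fun x => P x ^ 2))^k := by
            rw [E2, hαdef, hβdef]; ring_nf

lemma cubePr_mono {n : ℕ} {A B : Set (Fin n → Bool)} (h : A ⊆ B) : cubePr n A ≤ cubePr n B := by
  unfold cubePr
  apply div_le_div_of_nonneg_right ?_ (by positivity)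
  apply Finset.sum_le_sum
  intro x _
  by_cases hx : x ∈ A
  · simp [hx, h hx]
  · simp only [hx, if_false]
    split <;> norm_num

lemma cube_markov (n m : ℕ) (P : (Fin n → Bool) → ℝ) (t : ℝ) (ht : 0 < t) :
    cubePr n {x | t ≤ |P x|} ≤ cubeE n (fun x => P x ^ (2*m)) / t^(2*m) := by
  unfold cubePr cubeE
  rw [div_right_comm]
  apply div_le_div_of_nonneg_right ?_ (by positivity)
  rw [Finset.sum_div]
  apply Finset.sum_le_sum
  intro x _
  by_cases hx : x ∈ {x | t ≤ |P x|}
  · rw [if_pos hx]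
    have hx' : t ≤ |P x| := hx
    rw [le_div_iff₀ (by positivity), one_mul]
    calc t^(2*m) ≤ |P x|^(2*m) := pow_le_pow_left₀ ht.le hx' _
      _ = P x ^ (2*m) := (even_two_mul m).pow_abs (P x)
  · rw [if_neg hx]
    exact div_nonneg ((even_two_mul m).pow_nonneg (P x)) (by positivity)

lemma quantile_le {n : ℕ} {P : (Fin n → Bool) → ℝ} {r t a : ℝ} (hq : IsQuantile n P r a)
    (h : cubePr n {x | t ≤ |P x|} < Real.exp (-r)) : a ≤ t := by
  by_contra hc
  push_neg at hc
  have hsub : {x | a ≤ P x} ⊆ {x : Fin n → Bool | t ≤ |P x|} := fun x hx =>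
    le_trans hc.le (le_trans hx (le_abs_self _))
  exact absurd (le_trans hq.1 (cubePr_mono hsub)) (not_le.mpr h)

lemma exp_neg_one_lt_half : Real.exp (-1) < 1/2 := by
  have hmul : Real.exp (-1) * Real.exp 1 = 1 := by rw [← Real.exp_add]; norm_num
  nlinarith [Real.exp_one_gt_d9, Real.exp_pos (-1)]

lemma quantile_lower {n : ℕ} {P : (Fin n → Bool) → ℝ} {a1 : ℝ} (hq : IsQuantile n P 1 a1)
    (s : ℝ) (hs : 0 < s) (hs2 : cubeE n (fun x => P x ^ 2) = s^2) : -(2*s) ≤ a1 := by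
  by_contra hc
  push_neg at hc
  have hsub : {x | P x ≤ a1} ⊆ {x : Fin n → Bool | 2*s ≤ |P x|} := by
    intro x hx
    have h1 : P x < -(2*s) := lt_of_le_of_lt hx hc
    calc 2*s ≤ -(P x) := by linarith
      _ ≤ |P x| := neg_le_abs _
  have h1 : 1 - Real.exp (-1) ≤ cubePr n {x : Fin n → Bool | 2*s ≤ |P x|} :=
    le_trans hq.2 (cubePr_mono hsub)
  have h2 := cube_markov n 1 P (2*s) (by positivity)
  have e1 : (fun x : Fin n → Bool => P x ^ (2*1)) = fun x => P x ^ 2 := by norm_num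
  rw [e1, hs2] at h2
  have h3 : s^2 / (2*s)^(2*1) = 1/4 := by
    field_simp
    ring
  rw [h3] at h2
  have := exp_neg_one_lt_half
  linarith [le_trans h1 h2]

lemma cubeE_sq_zero {n : ℕ} {P : (Fin n → Bool) → ℝ}
    (h : cubeE n (fun x => P x ^ 2) = 0) : ∀ x, P x = 0 := by
  have hsum : (∑ x : Fin n → Bool, P x ^ 2) = 0 := by
    unfold cubeE at h
    field_simp at h
    rw [mul_zero] at h
    exact h
  intro x
  have := (Finset.sum_eq_zero_iff_of_nonneg (fun y _ => sq_nonneg (P y))).mp hsum x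
    (Finset.mem_univ x)
  exact pow_eq_zero_iff (by norm_num) |>.mp this

lemma pow_8_2_10 (d : ℕ) (hd : 1 ≤ d) : (8:ℝ)^d + 2 ≤ 10^d := by
  induction d with
  | zero => omega
  | succ d ih =>
    rcases Nat.eq_or_lt_of_le hd with h | h
    · rw [← h]; norm_num
    · have hd' : 1 ≤ d := by omega
      have := ih hd'
      have h8 : (0:ℝ) < 8^d := by positivity
      calc (8:ℝ)^(d+1) + 2 = 8 * 8^d + 2 := by ring
        _ ≤ 10 * (8^d + 2) := by nlinarith
        _ ≤ 10 * 10^d := by nlinarith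
        _ = 10^(d+1) := by ring

lemma key_arith (d : ℕ) (hd : 1 ≤ d) (r : ℝ) (hr : 1 ≤ r) :
    ∀ k : ℕ, k = ⌈r/(d:ℝ)⌉₊ + 1 →
    ((2*k : ℝ))^(d*k) * Real.exp r < ((8:ℝ)^d * (r/(d:ℝ)+1) ^ ((d:ℝ)/2))^(2*k) := by
  intro k hk
  have hdpos : (0:ℝ) < d := by exact_mod_cast hd
  set ρ : ℝ := r / d with hρdef
  have hρ : 0 < ρ := div_pos (by linarith) hdpos
  have hk1 : 1 ≤ k := by omega
  have hm1 : 1 ≤ d*k := Nat.one_le_iff_ne_zero.mpr (by positivity)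
  -- rewrite RHS
  have hw : (((ρ+1) ^ ((d:ℝ)/2)) : ℝ)^(2*k) = (ρ+1)^(d*k) := by
    rw [← Real.rpow_natCast ((ρ+1) ^ ((d:ℝ)/2)) (2*k), ← Real.rpow_mul (by linarith)]
    have : (d:ℝ)/2 * ((2*k : ℕ) : ℝ) = ((d*k : ℕ) : ℝ) := by push_cast; ring
    rw [this, Real.rpow_natCast]
  have hrhs : ((8:ℝ)^d * (ρ+1) ^ ((d:ℝ)/2))^(2*k) = (64*(ρ+1))^(d*k) := by
    rw [mul_pow, hw, ← pow_mul]
    have e : d*(2*k) = 2*(d*k) := by ring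
    rw [e, pow_mul]
    norm_num [mul_pow]
  rw [hrhs]
  -- bound LHS
  have hkle : (k:ℝ) ≤ ρ + 2 := by
    have := Nat.ceil_lt_add_one hρ.le
    rw [hk]
    push_cast
    linarith
  have h2k : (2*k:ℝ) ≤ 4*(ρ+1) := by linarith
  have hrle : r ≤ ((d*k : ℕ) : ℝ) := by
    have h1 : ρ ≤ (k:ℝ) := by
      rw [hk]; push_cast
      linarith [Nat.le_ceil ρ]
    have hrd : ρ * d = r := div_mul_cancel₀ r (ne_of_gt hdpos)
    rw [← hrd]
    push_cast
    nlinarith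
  have hexp : Real.exp r ≤ Real.exp 1 ^ (d*k) := by
    rw [Real.exp_one_pow]
    exact Real.exp_le_exp.mpr hrle
  have hLHS : ((2*k : ℝ))^(d*k) * Real.exp r ≤ (4*(ρ+1) * Real.exp 1)^(d*k) := by
    calc ((2*k : ℝ))^(d*k) * Real.exp r
        ≤ (4*(ρ+1))^(d*k) * Real.exp 1 ^ (d*k) :=
          mul_le_mul (pow_le_pow_left₀ (by positivity) h2k _) hexp
            (le_of_lt (Real.exp_pos r)) (by positivity)
      _ = (4*(ρ+1) * Real.exp 1)^(d*k) := (mul_pow _ _ _).symm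
  apply lt_of_le_of_lt hLHS
  apply pow_lt_pow_left₀ ?_ (by positivity) (by omega)
  nlinarith [Real.exp_one_lt_d9]

/-- Tail bound: `a_r - a_1 ≤ C^d (r/d + 1)^{d/2} ‖P(X)‖₂` for all `r ≥ 1`. -/
theorem tail_bound :
    ∃ C : ℝ, 0 < C ∧
      ∀ (n d : ℕ), 1 ≤ n → 1 ≤ d →
        ∀ P : (Fin n → Bool) → ℝ, IsPolyDeg n d P →
          ∀ r : ℝ, 1 ≤ r →
            ∀ ar a1 : ℝ, IsQuantile n P r ar → IsQuantile n P 1 a1 →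
              ar - a1 ≤
                C ^ d * (r / (d : ℝ) + 1) ^ ((d : ℝ) / 2) *
                  Real.sqrt (cubeE n fun x => (P x) ^ 2) := by
  refine ⟨10, by norm_num, ?_⟩
  intro n d hn hd P hP r hr ar a1 hqr hq1
  have hdpos : (0:ℝ) < d := by exact_mod_cast hd
  have hρ : 0 < r/(d:ℝ) := div_pos (by linarith) hdpos
  set w : ℝ := (r/(d:ℝ) + 1) ^ ((d:ℝ)/2) with hwdef
  have hw1 : 1 ≤ w := Real.one_le_rpow (by linarith) (by positivity)
  have hw0 : 0 < w := lt_of_lt_of_le one_pos hw1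
  have hE2 : 0 ≤ cubeE n (fun x => P x ^ 2) := cubeE_nonneg fun x => sq_nonneg _
  set s : ℝ := Real.sqrt (cubeE n fun x => P x ^ 2) with hsdef
  have hs2 : cubeE n (fun x => P x ^ 2) = s^2 := (Real.sq_sqrt hE2).symm
  have hsnn : 0 ≤ s := Real.sqrt_nonneg _
  rcases eq_or_lt_of_le hsnn with hs0 | hspos
  · -- degenerate case : P ≡ 0
    have hz : cubeE n (fun x => P x ^ 2) = 0 := by rw [hs2, ← hs0]; norm_num
    have hP0 := cubeE_sq_zero hz
    have har : ar ≤ 0 := by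
      by_contra hc
      push_neg at hc
      have hempty : ∀ x : Fin n → Bool, ¬ (ar ≤ P x) := fun x => by rw [hP0 x]; linarith
      have hzero : cubePr n {x | ar ≤ P x} = 0 := by
        unfold cubePr
        rw [Finset.sum_eq_zero, zero_div]
        intro x _
        simp only [Set.mem_setOf_eq]
        rw [if_neg (hempty x)]
      have h1 := hqr.1
      rw [hzero] at h1
      exact absurd h1 (not_le.mpr (Real.exp_pos (-r)))
    have ha1 : 0 ≤ a1 := by
      by_contra hc
      push_neg at hc
      have hempty : ∀ x : Fin n → Bool, ¬ (P x ≤ a1) := fun x => by rw [hP0 x]; linarith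
      have hzero : cubePr n {x | P x ≤ a1} = 0 := by
        unfold cubePr
        rw [Finset.sum_eq_zero, zero_div]
        intro x _
        simp only [Set.mem_setOf_eq]
        rw [if_neg (hempty x)]
      have h1 := hq1.2
      rw [hzero] at h1
      have := exp_neg_one_lt_half
      linarith
    have hrhs : (10:ℝ)^d * w * s = 0 := by rw [← hs0]; ring
    linarith
  · -- main case
    set k : ℕ := ⌈r/(d:ℝ)⌉₊ + 1 with hkdef
    have hk1 : 1 ≤ k := by omega
    have harith := key_arith d hd r hr k hkdef
    rw [← hwdef] at harith
    set t0 : ℝ := 8^d * w * s with ht0def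
    have ht0pos : 0 < t0 := by positivity
    have hmom2 : cubeE n (fun x => P x ^ (2*k)) ≤ (2*k:ℝ)^(d*k) * s^(2*k) := by
      calc cubeE n (fun x => P x ^ (2*k))
          ≤ ((2*k:ℝ)^d * cubeE n (fun x => P x^2))^k := moment_bound n d k hk1 P hP
        _ = (2*k:ℝ)^(d*k) * s^(2*k) := by rw [hs2, mul_pow, ← pow_mul, ← pow_mul]
    have hspow : (0:ℝ) < s^(2*k) := by positivity
    have hdiv : (2*k:ℝ)^(d*k) * s^(2*k) / t0^(2*k) < Real.exp (-r) := by
      have ht0pow : t0^(2*k) = ((8:ℝ)^d * w)^(2*k) * s^(2*k) := by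
        rw [ht0def, ← mul_pow]
      rw [ht0pow, div_lt_iff₀ (by positivity)]
      have h1 : (2*k:ℝ)^(d*k) < ((8:ℝ)^d*w)^(2*k) * Real.exp (-r) := by
        have e0 : (2*k:ℝ)^(d*k) = ((2*k:ℝ)^(d*k) * Real.exp r) * Real.exp (-r) := by
          rw [mul_assoc, ← Real.exp_add]
          simp
        rw [e0]
        exact mul_lt_mul_of_pos_right harith (Real.exp_pos (-r))
      calc (2*k:ℝ)^(d*k) * s^(2*k)
          < (((8:ℝ)^d*w)^(2*k) * Real.exp (-r)) * s^(2*k) :=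
            mul_lt_mul_of_pos_right h1 hspow
        _ = Real.exp (-r) * (((8:ℝ)^d*w)^(2*k) * s^(2*k)) := by ring
    have hPr : cubePr n {x | t0 ≤ |P x|} < Real.exp (-r) := by
      apply lt_of_le_of_lt (cube_markov n k P t0 ht0pos)
      apply lt_of_le_of_lt ?_ hdiv
      exact div_le_div_of_nonneg_right hmom2 (by positivity)
    set B : ℝ := 10^d * w with hBdef
    have hB : t0 ≤ (B - 2)*s := by
      have h810 := pow_8_2_10 d hd
      have hint : (0:ℝ) ≤ ((10:ℝ)^d - 8^d) * (w - 1) :=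
        mul_nonneg (by linarith) (by linarith)
      have hkey : (8:ℝ)^d * w + 2 ≤ 10^d * w := by nlinarith [hint, h810]
      rw [ht0def, hBdef]
      have : (8:ℝ)^d * w ≤ 10^d * w - 2 := by linarith
      nlinarith [this, hspos.le]
    have hsub : {x : Fin n → Bool | (B-2)*s ≤ |P x|} ⊆ {x | t0 ≤ |P x|} :=
      fun x hx => le_trans hB hx
    have hPr2 : cubePr n {x | (B-2)*s ≤ |P x|} < Real.exp (-r) :=
      lt_of_le_of_lt (cubePr_mono hsub) hPr
    have har : ar ≤ (B-2)*s := quantile_le hqr hPr2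
    have ha1 : -(2*s) ≤ a1 := quantile_lower hq1 s hspos hs2
    calc ar - a1 ≤ (B-2)*s + 2*s := by linarith
      _ = B * s := by ring
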